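/- Let F be a complex Banach space, let K be a bounded linear operator on F, let λ ∈ σ(K) and R > 0 be such that σ(K) ∩ {z ∈ ℂ : |z − λ| ≤ R} = {λ}. Let (K_N) be a sequence of bounded linear operators on F such that K_N f → K f as N → ∞ for every f ∈ F, and such that for every z ∈ ρ(K) there exist N_z ∈ ℕ and M_z < ∞ with z ∈ ρ(K_N) and ‖R(z, K_N)‖ ≤ M_z for all N > N_z. For 0 < ε < R define P^ε = (2πi)⁻¹ ∮_{|z−λ|=ε} R(z, K) dz and, for those N for which the circle {|z − λ| = ε} lies in ρ(K_N), define P_N^ε = (2πi)⁻¹ ∮_{|z−λ|=ε} R(z, K_N) dz. Assume that for every ε ∈ (0, R): P^ε ∘ P^ε = P^ε, the range of P^ε is finite-dimensional of dimension m ≥ 1, and there is N(ε) such that P_N^ε is defined and satisfies P_N^ε ∘ P_N^ε = P_N^ε for all N > N(ε). Then for every ε ∈ (0, R) there exists N₀ ∈ ℕ such that for all N > N₀: σ(K_N) ∩ {z : |z − λ| ≤ R} ⊆ {z : |z − λ| < ε} and σ(K_N) ∩ {z : |z − λ| ≤ ε} ≠ ∅; in particular the Hausdorff distance between σ(K_N)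 ∩ {z : |z − λ| ≤ R} and {λ} tends to 0 as N → ∞. -/

import Mathlib

open Filter Metric

/-- The Riesz spectral projection `(2πi)⁻¹ ∮_{|z-c|=r} R(z, A) dz`. -/
noncomputable def rieszProjection {F : Type*} [NormedAddCommGroup F]
    [NormedSpace ℂ F] (A : F →L[ℂ] F) (c : ℂ) (r : ℝ) : F →L[ℂ] F :=
  (2 * (Real.pi : ℂ) * Complex.I)⁻¹ • (∮ z in C(c, r), resolvent A z)

lemma aux_inverse_perturb {A : Type*} [NormedRing A] [NormOneClass A] [CompleteSpace A]
    (u : Aˣ) (t : A) (M : ℝ) (hM : ‖(↑u⁻¹ : A)‖ ≤ M) (ht : ‖t‖ * M < 2⁻¹) :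
    IsUnit ((u : A) + t) ∧ ‖Ring.inverse ((u : A) + t)‖ ≤ 2 * M := by
  have hM0 : (0:ℝ) ≤ M := le_trans (norm_nonneg _) hM
  set x : A := -((↑u⁻¹ : A) * t) with hx
  have hxnorm : ‖x‖ ≤ ‖t‖ * M := by
    rw [hx, norm_neg]
    calc ‖(↑u⁻¹ : A) * t‖ ≤ ‖(↑u⁻¹ : A)‖ * ‖t‖ := norm_mul_le _ _
      _ ≤ M * ‖t‖ := mul_le_mul_of_nonneg_right hM (norm_nonneg _)
      _ = ‖t‖ * M := mul_comm _ _
  have hxhalf : ‖x‖ < 2⁻¹ := lt_of_le_of_lt hxnorm ht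
  have hxlt : ‖x‖ < 1 := hxhalf.trans (by norm_num)
  set w : Aˣ := Units.oneSub x hxlt with hw
  have hval : (u : A) * (w : A) = (u : A) + t := by
    have h1 : ((u : A)) * ((↑u⁻¹ : A) * t) = t := u.mul_inv_cancel_left t
    rw [hw, Units.val_oneSub, hx, sub_neg_eq_add, mul_add, mul_one, h1]
  have hunit : IsUnit ((u : A) + t) := ⟨u * w, by rw [Units.val_mul, hval]⟩
  have hinv : Ring.inverse ((u : A) + t) = (↑w⁻¹ : A) * (↑u⁻¹ : A) := by
    rw [← hval, ← Units.val_mul, Ring.inverse_unit, mul_inv_rev, Units.val_mul]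
  have hwinv : ‖(↑w⁻¹ : A)‖ ≤ 2 := by
    have h1 : (↑w⁻¹ : A) = Ring.inverse ((w : A)) := (Ring.inverse_unit w).symm
    have h2 : (↑w⁻¹ : A) = ∑' n : ℕ, x ^ n := by
      rw [h1, hw, Units.val_oneSub, ← geom_series_eq_inverse x hxlt]
    rw [h2]
    have h3 := tsum_geometric_le_of_norm_lt_one x hxlt
    rw [norm_one] at h3
    have h4 : (1 - ‖x‖)⁻¹ ≤ 2 := by
      rw [inv_le_iff_one_le_mul₀ (by linarith)]
      linarith
    linarith
  constructor
  · exact hunit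
  · rw [hinv]
    calc ‖(↑w⁻¹ : A) * (↑u⁻¹ : A)‖ ≤ ‖(↑w⁻¹ : A)‖ * ‖(↑u⁻¹ : A)‖ := norm_mul_le _ _
      _ ≤ 2 * M := mul_le_mul hwinv hM (norm_nonneg _) (by norm_num)

lemma aux_resolvent_perturb {F : Type*} [NormedAddCommGroup F] [NormedSpace ℂ F]
    [CompleteSpace F] [Nontrivial F] (A : F →L[ℂ] F) {z w : ℂ} {M : ℝ}
    (hz : z ∈ resolventSet ℂ A) (hM : ‖resolvent A z‖ ≤ M)
    (hw : dist w z * M < 2⁻¹) :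
    w ∈ resolventSet ℂ A ∧ ‖resolvent A w‖ ≤ 2 * M := by
  have hu : IsUnit (algebraMap ℂ (F →L[ℂ] F) z - A) := spectrum.mem_resolventSet_iff.mp hz
  set u : (F →L[ℂ] F)ˣ := hu.unit with hudef
  have huval : (u : F →L[ℂ] F) = algebraMap ℂ (F →L[ℂ] F) z - A := hu.unit_spec
  have huinv : (↑u⁻¹ : F →L[ℂ] F) = resolvent A z := by
    rw [resolvent, ← huval, Ring.inverse_unit]
  set t : F →L[ℂ] F := algebraMap ℂ (F →L[ℂ] F) (w - z) with htdef
  have htnorm : ‖t‖ = dist w z := by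
    rw [htdef, norm_algebraMap', Complex.dist_eq]
  have hsum : (u : F →L[ℂ] F) + t = algebraMap ℂ (F →L[ℂ] F) w - A := by
    rw [huval, htdef, map_sub]; abel
  have := aux_inverse_perturb u t M (by rw [huinv]; exact hM) (by rw [htnorm]; exact hw)
  rw [hsum] at this
  exact ⟨spectrum.mem_resolventSet_iff.mpr this.1, by rw [resolvent]; exact this.2⟩

lemma aux_resolvent_contAt {F : Type*} [NormedAddCommGroup F] [NormedSpace ℂ F]
    [CompleteSpace F] (A : F →L[ℂ] F) {z : ℂ} (hz : z ∈ resolventSet ℂ A) :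
    ContinuousAt (resolvent A) z := by
  show ContinuousAt (fun z : ℂ => Ring.inverse (algebraMap ℂ (F →L[ℂ] F) z - A)) z
  have hg : Continuous fun z : ℂ => algebraMap ℂ (F →L[ℂ] F) z - A :=
    (continuous_algebraMap ℂ (F →L[ℂ] F)).sub continuous_const
  have hu := spectrum.mem_resolventSet_iff.mp hz
  have h2 : ContinuousAt Ring.inverse (algebraMap ℂ (F →L[ℂ] F) z - A) := by
    have := NormedRing.inverse_continuousAt hu.unit
    rwa [hu.unit_spec] at this
  exact ContinuousAt.comp (f := fun z : ℂ => algebraMap ℂ (F →L[ℂ] F) z - A) h2 hg.continuousAt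

lemma aux_key : ∀ a : ℝ, 0 ≤ a → (2*(a+1))⁻¹ * a < 2⁻¹ := by
  intro a ha
  rw [inv_mul_lt_iff₀ (by linarith)]
  nlinarith

lemma aux_annulus {F : Type*} [NormedAddCommGroup F] [NormedSpace ℂ F] [CompleteSpace F]
    [Nontrivial F]
    (K : F →L[ℂ] F) (l : ℂ) (R : ℝ)
    (hiso : spectrum ℂ K ∩ closedBall l R = {l})
    (Kn : ℕ → F →L[ℂ] F)
    (hstab : ∀ z ∈ resolventSet ℂ K, ∃ Nz : ℕ, ∃ Mz : ℝ,
      ∀ N > Nz, z ∈ resolventSet ℂ (Kn N) ∧ ‖resolvent (Kn N) z‖ ≤ Mz)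
    (ε : ℝ) (hε : 0 < ε) (hεR : ε ≤ R)
    (hperturb : ∀ (A : F →L[ℂ] F) {z w : ℂ} {M : ℝ},
      z ∈ resolventSet ℂ A → ‖resolvent A z‖ ≤ M → dist w z * M < 2⁻¹ →
      w ∈ resolventSet ℂ A ∧ ‖resolvent A w‖ ≤ 2 * M) :
    ∃ N₀ : ℕ, ∃ M : ℝ, ∀ N > N₀, ∀ w ∈ closedBall l R \ ball l ε,
      w ∈ resolventSet ℂ (Kn N) ∧ ‖resolvent (Kn N) w‖ ≤ M := by
  set S := closedBall l R \ ball l ε with hSdef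
  have hScomp : IsCompact S := (isCompact_closedBall l R).diff isOpen_ball
  have hSres : ∀ w ∈ S, w ∈ resolventSet ℂ K := by
    intro w hw
    by_contra hres
    have hwspec : w ∈ spectrum ℂ K := hres
    have hmem : w ∈ spectrum ℂ K ∩ closedBall l R := ⟨hwspec, hw.1⟩
    rw [hiso, Set.mem_singleton_iff] at hmem
    exact hw.2 (by rw [hmem]; exact mem_ball_self hε)
  choose! Nf Mf hNM using hstab
  set M' : ℂ → ℝ := fun z => max (Mf z) 0 with hM'def
  have hM'0 : ∀ z, 0 ≤ M' z := fun z => le_max_right _ _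
  set δ : ℂ → ℝ := fun z => (2 * (M' z + 1))⁻¹ with hδdef
  have hδpos : ∀ z, 0 < δ z := fun z => inv_pos.mpr (by have := hM'0 z; linarith)
  obtain ⟨tt, htt1, htt2⟩ := hScomp.elim_nhds_subcover (fun z => ball z (δ z))
    (fun z _ => ball_mem_nhds z (hδpos z))
  refine ⟨tt.sup Nf, 2 * ((tt.sup fun z => ⌈M' z⌉₊ : ℕ) : ℝ), fun N hN w hw => ?_⟩
  obtain ⟨z, hz, hwz⟩ := Set.mem_iUnion₂.mp (htt2 hw)
  have hzS : z ∈ S := htt1 z hz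
  have hzres : z ∈ resolventSet ℂ K := hSres z hzS
  have hNz : N > Nf z := lt_of_le_of_lt (Finset.le_sup hz) hN
  obtain ⟨hz1, hz2⟩ := hNM z hzres N hNz
  have hz2' : ‖resolvent (Kn N) z‖ ≤ M' z := hz2.trans (le_max_left _ _)
  have hd : dist w z * M' z < 2⁻¹ := by
    have h1 : dist w z < δ z := mem_ball.mp hwz
    calc dist w z * M' z ≤ δ z * M' z :=
          mul_le_mul_of_nonneg_right h1.le (hM'0 z)
      _ < 2⁻¹ := aux_key (M' z) (hM'0 z)
  obtain ⟨h1, h2⟩ := hperturb (Kn N) hz1 hz2' hd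
  refine ⟨h1, h2.trans ?_⟩
  have : M' z ≤ ((tt.sup fun z => ⌈M' z⌉₊ : ℕ) : ℝ) :=
    (Nat.le_ceil _).trans (Nat.cast_le.mpr (Finset.le_sup (f := fun z => ⌈M' z⌉₊) hz))
  linarith

lemma aux_cont {F : Type*} [NormedAddCommGroup F] [NormedSpace ℂ F] [CompleteSpace F]
    (A : F →L[ℂ] F) (c : ℂ) (r : ℝ) (hr : 0 ≤ r)
    (h : ∀ z ∈ sphere c r, z ∈ resolventSet ℂ A) :
    Continuous fun θ : ℝ => resolvent A (circleMap c r θ) := by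
  show Continuous fun θ : ℝ =>
    Ring.inverse (algebraMap ℂ (F →L[ℂ] F) (circleMap c r θ) - A)
  have hg : Continuous fun z : ℂ => algebraMap ℂ (F →L[ℂ] F) z - A :=
    (continuous_algebraMap ℂ (F →L[ℂ] F)).sub continuous_const
  refine continuous_iff_continuousAt.mpr fun θ => ?_
  have hz : circleMap c r θ ∈ resolventSet ℂ A := h _ (circleMap_mem_sphere c hr θ)
  have hu := spectrum.mem_resolventSet_iff.mp hz
  have h2 : ContinuousAt Ring.inverse (algebraMap ℂ (F →L[ℂ] F) (circleMap c r θ) - A) := by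
    have := NormedRing.inverse_continuousAt hu.unit
    rwa [hu.unit_spec] at this
  have h3 : ContinuousAt (fun z : ℂ =>
      Ring.inverse (algebraMap ℂ (F →L[ℂ] F) z - A)) (circleMap c r θ) :=
    ContinuousAt.comp (f := fun z : ℂ => algebraMap ℂ (F →L[ℂ] F) z - A) h2 hg.continuousAt
  exact h3.comp (continuous_circleMap c r).continuousAt

lemma aux_integrand_cont {F : Type*} [NormedAddCommGroup F] [NormedSpace ℂ F] [CompleteSpace F]
    (A : F →L[ℂ] F) (c : ℂ) (r : ℝ) (hr : 0 ≤ r)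
    (h : ∀ z ∈ sphere c r, z ∈ resolventSet ℂ A) :
    Continuous fun θ : ℝ => deriv (circleMap c r) θ • resolvent A (circleMap c r θ) := by
  have h1 : Continuous fun θ : ℝ => deriv (circleMap c r) θ := by
    simp only [deriv_circleMap]
    exact (continuous_circleMap 0 r).mul continuous_const
  exact h1.smul (aux_cont A c r hr h)

lemma aux_riesz_apply {F : Type*} [NormedAddCommGroup F] [NormedSpace ℂ F] [CompleteSpace F]
    (A : F →L[ℂ] F) (c : ℂ) (r : ℝ) (hr : 0 ≤ r)
    (h : ∀ z ∈ sphere c r, z ∈ resolventSet ℂ A) (x : F) :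
    rieszProjection A c r x = (2 * (Real.pi : ℂ) * Complex.I)⁻¹ •
      ∫ θ in (0:ℝ)..(2 * Real.pi),
        deriv (circleMap c r) θ • (resolvent A (circleMap c r θ) x) := by
  have hint : IntervalIntegrable
      (fun θ : ℝ => deriv (circleMap c r) θ • resolvent A (circleMap c r θ))
      MeasureTheory.volume 0 (2 * Real.pi) :=
    (aux_integrand_cont A c r hr h).intervalIntegrable _ _
  rw [rieszProjection, ContinuousLinearMap.smul_apply, circleIntegral,
    ContinuousLinearMap.intervalIntegral_apply hint x]
  simp only [ContinuousLinearMap.smul_apply]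

lemma aux_resolvent_apply_tendsto {F : Type*} [NormedAddCommGroup F] [NormedSpace ℂ F]
    [CompleteSpace F] (K : F →L[ℂ] F) (Kn : ℕ → F →L[ℂ] F)
    (hconv : ∀ f : F, Tendsto (fun N => Kn N f) atTop (nhds (K f)))
    {z : ℂ} (hzK : z ∈ resolventSet ℂ K) (N₀ : ℕ) (M : ℝ)
    (hKn : ∀ N > N₀, z ∈ resolventSet ℂ (Kn N) ∧ ‖resolvent (Kn N) z‖ ≤ M) (x : F) :
    Tendsto (fun N => resolvent (Kn N) z x) atTop (nhds (resolvent K z x)) := by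
  set y := resolvent K z x with hy
  rw [← tendsto_sub_nhds_zero_iff]
  refine squeeze_zero_norm' (a := fun N => M * ‖Kn N y - K y‖) ?_ ?_
  · filter_upwards [eventually_gt_atTop N₀] with N hN
    obtain ⟨h1, h2⟩ := hKn N hN
    have hu := spectrum.mem_resolventSet_iff.mp hzK
    have huN := spectrum.mem_resolventSet_iff.mp h1
    have e1 : resolvent K z = ↑hu.unit⁻¹ := by
      rw [← Ring.inverse_unit hu.unit, hu.unit_spec, resolvent]
    have e2 : resolvent (Kn N) z = ↑huN.unit⁻¹ := by
      rw [← Ring.inverse_unit huN.unit, huN.unit_spec, resolvent]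
    have hid : resolvent (Kn N) z - resolvent K z
        = resolvent (Kn N) z * ((Kn N - K) * resolvent K z) := by
      have e3 : Kn N - K = (↑hu.unit : F →L[ℂ] F) - ↑huN.unit := by
        rw [hu.unit_spec, huN.unit_spec]; abel
      rw [e1, e2, e3, sub_mul, Units.mul_inv, mul_sub, mul_one, ← mul_assoc,
        Units.inv_mul, one_mul]
    have happ : resolvent (Kn N) z x - y = resolvent (Kn N) z (Kn N y - K y) := by
      have := congrArg (fun T : F →L[ℂ] F => T x) hid
      simpa [ContinuousLinearMap.sub_apply, ContinuousLinearMap.mul_apply, hy] using this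
    rw [happ]
    calc ‖resolvent (Kn N) z (Kn N y - K y)‖
        ≤ ‖resolvent (Kn N) z‖ * ‖Kn N y - K y‖ := ContinuousLinearMap.le_opNorm _ _
      _ ≤ M * ‖Kn N y - K y‖ := mul_le_mul_of_nonneg_right h2 (norm_nonneg _)
  · have h0 : Tendsto (fun N => ‖Kn N y - K y‖) atTop (nhds 0) :=
      tendsto_iff_norm_sub_tendsto_zero.mp (hconv y)
    simpa using h0.const_mul M

lemma aux_proj_tendsto {F : Type*} [NormedAddCommGroup F] [NormedSpace ℂ F]
    [CompleteSpace F] (K : F →L[ℂ] F) (Kn : ℕ → F →L[ℂ] F)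
    (hconv : ∀ f : F, Tendsto (fun N => Kn N f) atTop (nhds (K f)))
    (l : ℂ) {ε : ℝ} (hε : 0 < ε)
    (hKres : ∀ z ∈ sphere l ε, z ∈ resolventSet ℂ K)
    (N₀ : ℕ) (M : ℝ)
    (hKn : ∀ N > N₀, ∀ z ∈ sphere l ε,
      z ∈ resolventSet ℂ (Kn N) ∧ ‖resolvent (Kn N) z‖ ≤ M) (x : F) :
    Tendsto (fun N => rieszProjection (Kn N) l ε x) atTop
      (nhds (rieszProjection K l ε x)) := by
  set c : ℂ := (2 * (Real.pi : ℂ) * Complex.I)⁻¹ with hc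
  set G : ℕ → ℝ → F := fun N θ =>
    deriv (circleMap l ε) θ • (resolvent (Kn N) (circleMap l ε θ) x) with hG
  set g : ℝ → F := fun θ =>
    deriv (circleMap l ε) θ • (resolvent K (circleMap l ε θ) x) with hg
  have hcontN : ∀ N > N₀, Continuous (G N) := by
    intro N hN
    have h1 : Continuous fun θ : ℝ => deriv (circleMap l ε) θ := by
      simp only [deriv_circleMap]
      exact (continuous_circleMap 0 ε).mul continuous_const
    have h2 := aux_cont (Kn N) l ε hε.le (fun z hz => (hKn N hN z hz).1)
    exact h1.smul ((ContinuousLinearMap.apply ℂ F x).continuous.comp h2)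
  have key : Tendsto (fun N => ∫ θ in (0:ℝ)..(2 * Real.pi), G N θ) atTop
      (nhds (∫ θ in (0:ℝ)..(2 * Real.pi), g θ)) := by
    refine intervalIntegral.tendsto_integral_filter_of_dominated_convergence
      (fun _ => ε * (M * ‖x‖)) ?_ ?_ (intervalIntegrable_const) ?_
    · filter_upwards [eventually_gt_atTop N₀] with N hN
      exact (hcontN N hN).aestronglyMeasurable
    · filter_upwards [eventually_gt_atTop N₀] with N hN
      refine MeasureTheory.ae_of_all _ fun θ _ => ?_
      rw [hG, norm_smul]
      have h1 : ‖deriv (circleMap l ε) θ‖ = ε := by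
        simp [deriv_circleMap, _root_.abs_of_nonneg hε.le]
      have h2 : ‖resolvent (Kn N) (circleMap l ε θ) x‖ ≤ M * ‖x‖ :=
        le_trans (ContinuousLinearMap.le_opNorm _ _)
          (mul_le_mul_of_nonneg_right
            ((hKn N hN _ (circleMap_mem_sphere l hε.le θ)).2) (norm_nonneg x))
      rw [h1]
      exact mul_le_mul_of_nonneg_left h2 hε.le
    · refine MeasureTheory.ae_of_all _ fun θ _ => ?_
      have hz : circleMap l ε θ ∈ sphere l ε := circleMap_mem_sphere l hε.le θ
      exact (aux_resolvent_apply_tendsto K Kn hconv (hKres _ hz) N₀ M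
        (fun N hN => hKn N hN _ hz) x).const_smul _
  have heq : ∀ᶠ N in atTop,
      (fun N => c • ∫ θ in (0:ℝ)..(2 * Real.pi), G N θ) N
        = rieszProjection (Kn N) l ε x := by
    filter_upwards [eventually_gt_atTop N₀] with N hN
    exact (aux_riesz_apply (Kn N) l ε hε.le (fun z hz => (hKn N hN z hz).1) x).symm
  rw [aux_riesz_apply K l ε hε.le hKres x]
  exact (key.const_smul c).congr' heq


/-- Hausdorff convergence of approximate spectra to an isolated eigenvalue
(Theorem 1 of Section 4): under pointwise convergence `K_N f → K f`, stable
convergence of resolvents, and the projection assumptions on the Riesz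
integrals `P^ε` and `P_N^ε` (with `dim P^ε(F) = m ≥ 1`), for every
`ε ∈ (0, R)` and all large `N` the spectrum of `K_N` inside the ball of
radius `R` around `λ` is contained in the ball of radius `ε` and meets the
closed ball of radius `ε`; in particular the Hausdorff distance between
`σ(K_N) ∩ {|z - λ| ≤ R}` and `{λ}` tends to `0`. -/
theorem hausdorff_convergence_isolated_eigenvalue {F : Type*}
    [NormedAddCommGroup F] [NormedSpace ℂ F] [CompleteSpace F]
    (K : F →L[ℂ] F) (l : ℂ) (hl : l ∈ spectrum ℂ K)
    (R : ℝ) (hR : 0 < R)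
    (hiso : spectrum ℂ K ∩ closedBall l R = {l})
    (Kn : ℕ → F →L[ℂ] F)
    (hconv : ∀ f : F, Tendsto (fun N => Kn N f) atTop (nhds (K f)))
    (hstab : ∀ z ∈ resolventSet ℂ K, ∃ Nz : ℕ, ∃ Mz : ℝ,
      ∀ N > Nz, z ∈ resolventSet ℂ (Kn N) ∧ ‖resolvent (Kn N) z‖ ≤ Mz)
    (m : ℕ) (hm : 1 ≤ m)
    (hP : ∀ ε : ℝ, 0 < ε → ε < R →
      rieszProjection K l ε ∘L rieszProjection K l ε = rieszProjection K l ε ∧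
        FiniteDimensional ℂ (LinearMap.range (rieszProjection K l ε : F →ₗ[ℂ] F)) ∧
        Module.finrank ℂ (LinearMap.range (rieszProjection K l ε : F →ₗ[ℂ] F)) = m)
    (hPn : ∀ ε : ℝ, 0 < ε → ε < R → ∃ Nε : ℕ, ∀ N > Nε,
      (∀ z ∈ sphere l ε, z ∈ resolventSet ℂ (Kn N)) ∧
        rieszProjection (Kn N) l ε ∘L rieszProjection (Kn N) l ε =
          rieszProjection (Kn N) l ε) :
    (∀ ε : ℝ, 0 < ε → ε < R → ∃ N₀ : ℕ, ∀ N > N₀,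
      spectrum ℂ (Kn N) ∩ closedBall l R ⊆ ball l ε ∧
        (spectrum ℂ (Kn N) ∩ closedBall l ε).Nonempty) ∧
      Tendsto (fun N => hausdorffDist (spectrum ℂ (Kn N) ∩ closedBall l R) {l})
        atTop (nhds 0) := by
  -- F is nontrivial, since otherwise the spectrum of K would be empty
  have hnt : Nontrivial F := by
    by_contra h
    have hss : Subsingleton F := not_nontrivial_iff_subsingleton.mp h
    have : Subsingleton (F →L[ℂ] F) :=
      ⟨fun f g => ContinuousLinearMap.ext fun x => Subsingleton.elim _ _⟩
    exact absurd hl (spectrum.notMem_iff.mpr (isUnit_of_subsingleton _))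
  haveI := hnt
  -- Main quantitative statement, for every ε ∈ (0, R)
  have main : ∀ ε : ℝ, 0 < ε → ε < R → ∃ N₀ : ℕ, ∀ N > N₀,
      spectrum ℂ (Kn N) ∩ closedBall l R ⊆ ball l ε ∧
        (spectrum ℂ (Kn N) ∩ closedBall l ε).Nonempty := by
    intro ε hε hεR
    -- uniform resolvent control on the annulus
    obtain ⟨N₀, M, hann⟩ := aux_annulus K l R hiso Kn hstab ε hε hεR.le
      (fun A _ _ _ hz hM hd => aux_resolvent_perturb A hz hM hd)
    -- the sphere is contained in the annulus
    have hsph : ∀ z ∈ sphere l ε, z ∈ closedBall l R \ ball l ε := by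
      intro z hz
      rw [mem_sphere] at hz
      exact ⟨by rw [mem_closedBall, hz]; exact hεR.le, by rw [mem_ball, hz]; exact lt_irrefl ε⟩
    -- the sphere is in the resolvent set of K
    have hKres : ∀ z ∈ sphere l ε, z ∈ resolventSet ℂ K := by
      intro z hz
      by_contra hres
      have hzspec : z ∈ spectrum ℂ K := hres
      have hmem : z ∈ spectrum ℂ K ∩ closedBall l R := ⟨hzspec, (hsph z hz).1⟩
      rw [hiso, Set.mem_singleton_iff] at hmem
      rw [mem_sphere, hmem] at hz
      simp at hz
      exact hε.ne' hz.symm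
    -- P ≠ 0, hence some x with P x ≠ 0
    obtain ⟨-, -, hrank⟩ := hP ε hε hεR
    have hPne : rieszProjection K l ε ≠ 0 := by
      intro h0
      rw [h0] at hrank
      have hbot : LinearMap.range ((0 : F →L[ℂ] F) : F →ₗ[ℂ] F) = ⊥ := by
        ext v
        simp [LinearMap.mem_range, eq_comm]
      rw [hbot] at hrank
      rw [finrank_bot] at hrank
      omega
    obtain ⟨x, hx⟩ : ∃ x : F, rieszProjection K l ε x ≠ 0 := by
      by_contra hc
      push_neg at hc
      exact hPne (ContinuousLinearMap.ext fun x => by simp [hc x])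
    -- strong convergence of the Riesz projections at x
    have htend := aux_proj_tendsto K Kn hconv l hε hKres N₀ M
      (fun N hN z hz => hann N hN z (hsph z hz)) x
    have hball : ball (rieszProjection K l ε x) ‖rieszProjection K l ε x‖
        ∈ nhds (rieszProjection K l ε x) := ball_mem_nhds _ (norm_pos_iff.mpr hx)
    obtain ⟨N₂, hN₂⟩ := eventually_atTop.mp (htend.eventually_mem hball)
    refine ⟨max N₀ N₂, fun N hN => ?_⟩
    have hN0 : N > N₀ := lt_of_le_of_lt (le_max_left _ _) hN
    have hN2 : N ≥ N₂ := le_of_lt (lt_of_le_of_lt (le_max_right _ _) hN)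
    constructor
    · -- containment in the open ball
      intro w hw
      by_contra hwball
      exact hw.1 ((hann N hN0 w ⟨hw.2, hwball⟩).1)
    · -- nonemptiness of the spectrum in the closed ε-ball
      by_contra hempty
      rw [Set.not_nonempty_iff_eq_empty] at hempty
      have hres : ∀ z ∈ closedBall l ε, z ∈ resolventSet ℂ (Kn N) := by
        intro z hz
        by_contra hzres
        have hzspec : z ∈ spectrum ℂ (Kn N) := hzres
        have : z ∈ spectrum ℂ (Kn N) ∩ closedBall l ε := ⟨hzspec, hz⟩
        rw [hempty] at this
        exact this
      have hzero : (∮ z in C(l, ε), resolvent (Kn N) z) = 0 := by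
        refine Complex.circleIntegral_eq_zero_of_differentiable_on_off_countable hε.le
          Set.countable_empty ?_ ?_
        · intro z hz
          exact (aux_resolvent_contAt (Kn N) (hres z hz)).continuousWithinAt
        · intro z hz
          exact (spectrum.hasDerivAt_resolvent
            (hres z (ball_subset_closedBall hz.1))).differentiableAt
      have hPN0 : rieszProjection (Kn N) l ε = 0 := by
        rw [rieszProjection, hzero, smul_zero]
      have := hN₂ N hN2
      rw [hPN0, ContinuousLinearMap.zero_apply, mem_ball, dist_zero_left] at this
      exact lt_irrefl _ this
  refine ⟨main, ?_⟩
  -- Hausdorff convergence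
  rw [Metric.tendsto_atTop]
  intro e he
  set ε : ℝ := min (e / 2) (R / 2) with hεdef
  have hε : 0 < ε := lt_min (half_pos he) (half_pos hR)
  have hεR : ε < R := lt_of_le_of_lt (min_le_right _ _) (half_lt_self hR)
  have hεe : ε < e := lt_of_le_of_lt (min_le_left _ _) (half_lt_self he)
  obtain ⟨N₀, hN₀⟩ := main ε hε hεR
  refine ⟨N₀ + 1, fun N hN => ?_⟩
  obtain ⟨hsub, ⟨w, hw⟩⟩ := hN₀ N (by omega)
  have hHd : hausdorffDist (spectrum ℂ (Kn N) ∩ closedBall l R) {l} ≤ ε := by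
    refine hausdorffDist_le_of_mem_dist hε.le ?_ ?_
    · intro z hz
      exact ⟨l, Set.mem_singleton l, le_of_lt (mem_ball.mp (hsub hz))⟩
    · intro y hy
      rw [Set.mem_singleton_iff] at hy
      refine ⟨w, ⟨hw.1, closedBall_subset_closedBall hεR.le hw.2⟩, ?_⟩
      rw [hy, dist_comm]
      exact mem_closedBall.mp hw.2
  have hHd0 : 0 ≤ hausdorffDist (spectrum ℂ (Kn N) ∩ closedBall l R) {l} :=
    hausdorffDist_nonneg
  rw [Real.dist_eq, sub_zero, abs_of_nonneg hHd0]
  exact lt_of_le_of_lt hHd hεe
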